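/- Let P ∈ ℤ[x] have degree d ≥ 2 and suppose P is injective on {1,...,N}. Let A_N = {P(1), ..., P(N)}. Then for every ε > 0, E(A_N) ≪_ε N^{2+ε}. -/

import Mathlib

section PEBhelpers
open Polynomial Finset


lemma PEB_comp_ne (P : Polynomial ℤ) (hd : 2 ≤ P.natDegree) (s : ℤ) (hs : s ≠ 0) (n : ℤ) :
    P.comp (X + C s) - P - C n ≠ 0 := by
  intro h
  have hc : P.comp (X + C s) = P + C n := by
    have h2 : P.comp (X + C s) - (P + C n) = 0 := by ring_nf; ring_nf at h; exact h
    exact sub_eq_zero.mp h2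
  have hD : (derivative P).comp (X + C s) = derivative P := by
    have := congrArg derivative hc
    rwa [derivative_comp, derivative_add, derivative_C, add_zero, derivative_add, derivative_X,
      derivative_C, add_zero, one_mul] at this
  set g := derivative P - C ((derivative P).eval 0) with hg
  have hroot : ∀ k : ℕ, g.IsRoot ((k : ℤ) * s) := by
    intro k
    induction k with
    | zero => simp [hg, IsRoot]
    | succ m ih =>
      have hstep : (derivative P).eval ((m : ℤ) * s + s) = (derivative P).eval ((m : ℤ) * s) := by
        have := congrArg (Polynomial.eval ((m : ℤ) * s)) hD
        simpa [eval_comp] using this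
      simp only [IsRoot, hg, eval_sub, eval_C] at ih ⊢
      push_cast
      rw [add_mul, one_mul, hstep]
      exact ih
  have hg0 : g = 0 := by
    apply Polynomial.eq_zero_of_infinite_isRoot
    apply Set.infinite_of_injective_forall_mem (f := fun k : ℕ => (k : ℤ) * s)
    · intro a b hab
      simpa [hs] using mul_right_cancel₀ hs hab
    · exact hroot
  have hP' : derivative P = C ((derivative P).eval 0) := by
    have := sub_eq_zero.mp hg0
    exact this
  have hco : (derivative P).coeff (P.natDegree - 1) = 0 := by
    rw [hP', coeff_C, if_neg]
    omega
  rw [coeff_derivative] at hco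
  have hd1 : P.natDegree - 1 + 1 = P.natDegree := by omega
  rw [hd1] at hco
  have hlc : P.coeff P.natDegree = 0 := by
    have : ((P.natDegree - 1 : ℕ) : ℤ) + 1 ≠ 0 := by positivity
    exact (mul_eq_zero.mp hco).resolve_right this
  have hP0 : P = 0 := leadingCoeff_eq_zero.mp hlc
  rw [hP0] at hd
  simp at hd


lemma PEB_factor_bound (ε : ℝ) (hε : 0 < ε) (p e : ℕ) (hp : 2 ≤ p) :
    ((e:ℝ) + 1) ≤ (if (p:ℝ) < 2 ^ (1/ε) then (1 + 2/ε) else 1) * ((p:ℝ) ^ e) ^ ε := by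
  have hp0 : (0:ℝ) < p := by positivity
  have hkey : ((p:ℝ) ^ e) ^ ε = (p:ℝ) ^ ((e:ℝ) * ε) := by
    rw [← Real.rpow_natCast (p:ℝ) e, ← Real.rpow_mul (le_of_lt hp0)]
  have he1 : ((e:ℝ) + 1) ≤ 2 ^ (e:ℕ) := by
    have := Nat.lt_two_pow_self (n := e)
    exact_mod_cast Nat.succ_le_of_lt this
  rw [hkey]
  split_ifs with hsmall
  · -- small prime: (e+1) ≤ (1+2/ε) * p^(eε), use p ≥ 2
    have h2 : (2:ℝ) ^ ((e:ℝ) * ε) ≤ (p:ℝ) ^ ((e:ℝ) * ε) := by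
      apply Real.rpow_le_rpow (by norm_num) (by exact_mod_cast hp) (by positivity)
    have hKpos : (0:ℝ) < 1 + 2/ε := by positivity
    have hmain : ((e:ℝ) + 1) ≤ (1 + 2/ε) * 2 ^ ((e:ℝ) * ε) := by
      have hexp : (2:ℝ) ^ ((e:ℝ) * ε) = Real.exp ((e:ℝ) * ε * Real.log 2) := by
        rw [Real.rpow_def_of_pos (by norm_num), mul_comm]
      have hge1 : (1:ℝ) ≤ 2 ^ ((e:ℝ) * ε) :=
        Real.one_le_rpow (by norm_num) (by positivity)
      have hgee : (e:ℝ) * ε * Real.log 2 ≤ 2 ^ ((e:ℝ) * ε) := by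
        rw [hexp]
        have := Real.add_one_le_exp ((e:ℝ) * ε * Real.log 2)
        linarith
      have hlog : (0.6931471803 : ℝ) < Real.log 2 := Real.log_two_gt_d9
      have hεe : (0:ℝ) ≤ (e:ℝ) := by positivity
      calc ((e:ℝ) + 1) ≤ 2 * ((e:ℝ) * ε * Real.log 2) / ε + 1 := by
            have h' : (e:ℝ) ≤ 2 * ((e:ℝ) * ε * Real.log 2) / ε := by
              rw [le_div_iff₀ hε]
              have ht : (0:ℝ) ≤ (e:ℝ) * ε := by positivity
              nlinarith [mul_nonneg ht (by linarith : (0:ℝ) ≤ 2 * Real.log 2 - 1)]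
            linarith
        _ = 1 + (2/ε) * ((e:ℝ) * ε * Real.log 2) := by ring
        _ ≤ 1 * 2 ^ ((e:ℝ) * ε) + (2/ε) * 2 ^ ((e:ℝ) * ε) := by
            have h1 : (1:ℝ) ≤ 1 * 2 ^ ((e:ℝ) * ε) := by rw [one_mul]; exact hge1
            have h2' : (2/ε) * ((e:ℝ) * ε * Real.log 2) ≤ (2/ε) * 2 ^ ((e:ℝ) * ε) := by
              apply mul_le_mul_of_nonneg_left hgee (by positivity)
            linarith
        _ = (1 + 2/ε) * 2 ^ ((e:ℝ) * ε) := by ring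
    calc ((e:ℝ) + 1) ≤ (1 + 2/ε) * 2 ^ ((e:ℝ) * ε) := hmain
      _ ≤ (1 + 2/ε) * (p:ℝ) ^ ((e:ℝ) * ε) := mul_le_mul_of_nonneg_left h2 (le_of_lt hKpos)
  · -- large prime: p ≥ 2^(1/ε), so p^ε ≥ 2 and (e+1) ≤ 2^e ≤ p^(eε)
    push_neg at hsmall
    have h2p : (2:ℝ) ≤ (p:ℝ) ^ ε := by
      have := Real.rpow_le_rpow (by positivity : (0:ℝ) ≤ (2:ℝ) ^ (1/ε)) hsmall (le_of_lt hε)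
      rwa [← Real.rpow_mul (by norm_num), one_div_mul_cancel (ne_of_gt hε),
        Real.rpow_one] at this
    have : (2:ℝ) ^ (e:ℕ) ≤ ((p:ℝ) ^ ε) ^ (e:ℕ) :=
      pow_le_pow_left₀ (by norm_num) h2p e
    rw [one_mul]
    have hrw : ((p:ℝ) ^ ε) ^ (e:ℕ) = (p:ℝ) ^ ((e:ℝ) * ε) := by
      rw [← Real.rpow_natCast ((p:ℝ) ^ ε) e, ← Real.rpow_mul (le_of_lt hp0), mul_comm]
    rw [hrw] at this
    linarith

lemma PEB_divisor_bound : ∀ ε : ℝ, 0 < ε → ∃ C : ℝ, 0 < C ∧ ∀ n : ℕ, n ≠ 0 →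
    (n.divisors.card : ℝ) ≤ C * (n : ℝ) ^ ε := by
  intro ε hε
  set K : ℝ := 1 + 2/ε with hK
  have hK1 : (1:ℝ) ≤ K := by
    have : 0 < 2/ε := by positivity
    rw [hK]; linarith
  set M : ℕ := ⌈(2:ℝ) ^ (1/ε)⌉₊ + 1 with hM
  refine ⟨K ^ M, by positivity, ?_⟩
  intro n hn
  have hcd := Nat.card_divisors hn
  have hcast : (n.divisors.card : ℝ) = ∏ p ∈ n.primeFactors, ((n.factorization p : ℝ) + 1) := by
    rw [hcd]
    push_cast
    ring
  rw [hcast]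
  set c : ℕ → ℝ := fun p => if (p:ℝ) < 2 ^ (1/ε) then K else 1 with hc
  have hstep : ∏ p ∈ n.primeFactors, ((n.factorization p : ℝ) + 1) ≤
      ∏ p ∈ n.primeFactors, (c p * ((p:ℝ) ^ (n.factorization p)) ^ ε) := by
    apply Finset.prod_le_prod
    · intro p _; positivity
    · intro p hpf
      exact PEB_factor_bound ε hε p (n.factorization p) (Nat.prime_of_mem_primeFactors hpf).two_le
  have hsplit : ∏ p ∈ n.primeFactors, (c p * ((p:ℝ) ^ (n.factorization p)) ^ ε) =
      (∏ p ∈ n.primeFactors, c p) * (∏ p ∈ n.primeFactors, ((p:ℝ) ^ (n.factorization p))) ^ ε := by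
    rw [Finset.prod_mul_distrib, Real.finset_prod_rpow _ _ (fun i _ => by positivity)]
  have hn' : (∏ p ∈ n.primeFactors, ((p:ℝ) ^ (n.factorization p))) = (n:ℝ) := by
    have h0 : ∏ p ∈ n.primeFactors, p ^ n.factorization p = n := by
      rw [← Nat.support_factorization]
      exact Nat.factorization_prod_pow_eq_self hn
    exact_mod_cast h0
  have hcprod : (∏ p ∈ n.primeFactors, c p) ≤ K ^ M := by
    have heq : (∏ p ∈ n.primeFactors, c p) =
        K ^ (n.primeFactors.filter (fun p : ℕ => (p:ℝ) < 2 ^ (1/ε))).card := by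
      rw [hc]
      rw [Finset.prod_ite, Finset.prod_const, Finset.prod_const_one, mul_one]
    rw [heq]
    apply pow_le_pow_right₀ hK1
    have hsub : n.primeFactors.filter (fun p : ℕ => (p:ℝ) < 2 ^ (1/ε)) ⊆ Finset.range M := by
      intro p hp
      rw [Finset.mem_filter] at hp
      rw [Finset.mem_range, hM]
      have h1 : (p:ℝ) < 2 ^ (1/ε) := hp.2
      have h2 : (p:ℝ) ≤ (⌈(2:ℝ) ^ (1/ε)⌉₊ : ℝ) := le_trans (le_of_lt h1) (Nat.le_ceil _)
      have : p ≤ ⌈(2:ℝ) ^ (1/ε)⌉₊ := by exact_mod_cast h2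
      omega
    calc _ ≤ (Finset.range M).card := Finset.card_le_card hsub
      _ = M := Finset.card_range M
  calc _ ≤ _ := hstep
    _ = (∏ p ∈ n.primeFactors, c p) * (n:ℝ) ^ ε := by rw [hsplit, hn']
    _ ≤ K ^ M * (n:ℝ) ^ ε := by
        apply mul_le_mul_of_nonneg_right hcprod (by positivity)


lemma PEB_eval_bound (P : Polynomial ℤ) (N : ℕ) (hN : 1 ≤ N) (x : ℤ)
    (hx : x ∈ Finset.Icc (1:ℤ) N) :
    |P.eval x| ≤ (∑ i ∈ Finset.range (P.natDegree+1), |P.coeff i|) * (N:ℤ) ^ P.natDegree := by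
  rw [Finset.mem_Icc] at hx
  have hxa : |x| ≤ (N:ℤ) := by rw [abs_le]; omega
  have hN1 : (1:ℤ) ≤ N := by exact_mod_cast hN
  rw [Polynomial.eval_eq_sum_range (p := P) x, Finset.sum_mul]
  refine (Finset.abs_sum_le_sum_abs _ _).trans (Finset.sum_le_sum ?_)
  intro i hi
  rw [Finset.mem_range] at hi
  rw [abs_mul, abs_pow]
  have h1 : |x| ^ i ≤ (N:ℤ) ^ P.natDegree := by
    calc |x| ^ i ≤ (N:ℤ) ^ i := pow_le_pow_left₀ (abs_nonneg x) hxa i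
      _ ≤ (N:ℤ) ^ P.natDegree := pow_le_pow_right₀ hN1 (by omega)
  exact mul_le_mul_of_nonneg_left h1 (abs_nonneg _)



lemma PEB_rep_bound (P : Polynomial ℤ) (hd : 2 ≤ P.natDegree) (N : ℕ) (n : ℤ) (hn : n ≠ 0) :
    (((Finset.Icc (1:ℤ) N) ×ˢ (Finset.Icc (1:ℤ) N)).filter
      (fun p => P.eval p.1 - P.eval p.2 = n)).card ≤ 2 * n.natAbs.divisors.card * P.natDegree := by
  classical
  set I := Finset.Icc (1:ℤ) (N:ℤ)
  set S := ((I ×ˢ I).filter (fun p => P.eval p.1 - P.eval p.2 = n)) with hS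
  set D : Finset ℤ := n.natAbs.divisors.image (fun m : ℕ => (m:ℤ)) ∪
    n.natAbs.divisors.image (fun m : ℕ => -(m:ℤ)) with hD
  have hDne : ∀ s ∈ D, s ≠ 0 := by
    intro s hsD
    rw [hD, Finset.mem_union, Finset.mem_image, Finset.mem_image] at hsD
    rcases hsD with ⟨m, hm, rfl⟩ | ⟨m, hm, rfl⟩ <;>
      · have := Nat.pos_of_mem_divisors hm
        simp; omega
  have hsub : S ⊆ D.biUnion (fun s => S.filter (fun p => p.1 - p.2 = s)) := by
    intro p hp
    have hp' := hp
    simp only [hS, mem_filter, mem_product] at hp'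
    obtain ⟨⟨h1, h2⟩, heq⟩ := hp'
    have hdvd : p.1 - p.2 ∣ n := heq ▸ Polynomial.sub_dvd_eval_sub p.1 p.2 P
    have hne : p.1 - p.2 ≠ 0 := by
      intro h0
      rw [h0] at hdvd
      exact hn (zero_dvd_iff.mp hdvd)
    have hmemD : p.1 - p.2 ∈ D := by
      have hna : (p.1 - p.2).natAbs ∈ n.natAbs.divisors :=
        Nat.mem_divisors.mpr ⟨Int.natAbs_dvd_natAbs.mpr hdvd, Int.natAbs_ne_zero.mpr hn⟩
      rw [hD, Finset.mem_union, Finset.mem_image, Finset.mem_image]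
      rcases Int.natAbs_eq (p.1 - p.2) with h | h
      · exact Or.inl ⟨_, hna, h.symm⟩
      · exact Or.inr ⟨_, hna, h.symm⟩
    refine mem_biUnion.mpr ⟨_, hmemD, mem_filter.mpr ⟨hp, rfl⟩⟩
  have hper : ∀ s ∈ D, (S.filter (fun p => p.1 - p.2 = s)).card ≤ P.natDegree := by
    intro s hsD
    have hs0 := hDne s hsD
    set Q := P.comp (X + C s) - P - C n with hQ
    have hQne : Q ≠ 0 := PEB_comp_ne P hd s hs0 n
    have hcard : (S.filter (fun p => p.1 - p.2 = s)).card ≤ Q.roots.toFinset.card := by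
      apply Finset.card_le_card_of_injOn (fun p => p.2)
      · intro p hp
        rw [Finset.mem_coe, Finset.mem_filter] at hp
        obtain ⟨hpS, hdiff⟩ := hp
        rw [hS, Finset.mem_filter] at hpS
        obtain ⟨_, heq⟩ := hpS
        have hQ0 : Q.eval p.2 = 0 := by
          simp only [hQ, eval_sub, eval_comp, eval_add, eval_X, eval_C]
          have h12 : p.2 + s = p.1 := by omega
          rw [h12]
          omega
        exact Multiset.mem_toFinset.mpr ((mem_roots hQne).mpr hQ0)
      · intro p hp q hq h2
        rw [Finset.mem_coe, Finset.mem_filter] at hp hq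
        have hps : p.1 - p.2 = s := hp.2
        have hqs : q.1 - q.2 = s := hq.2
        have h2' : p.2 = q.2 := h2
        have : p.1 = q.1 := by omega
        exact Prod.ext this h2
    have htf : Q.roots.toFinset.card ≤ Q.natDegree := by
      refine le_trans (Multiset.toFinset_card_le _) ?_
      exact_mod_cast Polynomial.card_roots' Q
    refine hcard.trans (htf.trans ?_)
    have h1 : (P.comp (X + C s)).natDegree = P.natDegree := by
      rw [natDegree_comp, natDegree_X_add_C, mul_one]
    calc Q.natDegree ≤ max (P.comp (X + C s) - P).natDegree (C n).natDegree :=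
          natDegree_sub_le _ _
      _ ≤ max (max (P.comp (X + C s)).natDegree P.natDegree) (C n).natDegree :=
          max_le_max (natDegree_sub_le _ _) le_rfl
      _ ≤ P.natDegree := by
          rw [natDegree_C, h1]
          simp
  calc S.card ≤ (D.biUnion (fun s => S.filter (fun p => p.1 - p.2 = s))).card :=
        Finset.card_le_card hsub
    _ ≤ ∑ s ∈ D, (S.filter (fun p => p.1 - p.2 = s)).card := Finset.card_biUnion_le
    _ ≤ ∑ _s ∈ D, P.natDegree := Finset.sum_le_sum hper
    _ = D.card * P.natDegree := by rw [Finset.sum_const, smul_eq_mul]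
    _ ≤ 2 * n.natAbs.divisors.card * P.natDegree := by
        apply Nat.mul_le_mul_right
        calc D.card ≤ _ + _ := Finset.card_union_le _ _
          _ ≤ 2 * n.natAbs.divisors.card := by
              have h1 := Finset.card_image_le (s := n.natAbs.divisors) (f := fun m : ℕ => (m:ℤ))
              have h2 := Finset.card_image_le (s := n.natAbs.divisors) (f := fun m : ℕ => -(m:ℤ))
              omega

end PEBhelpers

open Polynomial in


/-- The additive energy of a finite set `A ⊆ ℤ`. -/
def addEnergy (A : Finset ℤ) : ℕ :=
  ((A ×ˢ A ×ˢ A ×ˢ A).filter fun p => p.1 + p.2.1 = p.2.2.1 + p.2.2.2).card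

theorem polynomial_energy_bound
    (P : Polynomial ℤ) (hd : 2 ≤ P.natDegree) :
    ∀ ε : ℝ, 0 < ε → ∃ C : ℝ, 0 < C ∧ ∀ N : ℕ, 1 ≤ N →
      Set.InjOn P.eval (Set.Icc (1:ℤ) N) →
      (addEnergy ((Finset.Icc (1:ℤ) N).image P.eval) : ℝ) ≤
        C * (N : ℝ) ^ ((2:ℝ) + ε) := by
  intro ε hε
  classical
  set d := P.natDegree with hdd
  have hd0 : 0 < d := by omega
  set ε' : ℝ := ε / d with hε'def
  have hε'pos : 0 < ε' := by
    apply div_pos hε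
    exact_mod_cast hd0
  obtain ⟨C', hC'pos, hC'⟩ := PEB_divisor_bound ε' hε'pos
  set KZ : ℤ := ∑ i ∈ Finset.range (d+1), |P.coeff i| with hKZdef
  have hKZ1 : 1 ≤ KZ := by
    have hPne : P ≠ 0 := by
      intro h
      rw [hdd] at hd0
      rw [h] at hd0
      simp at hd0
    have hlc : P.coeff d ≠ 0 := by
      rw [hdd, Polynomial.coeff_natDegree]
      exact Polynomial.leadingCoeff_ne_zero.mpr hPne
    calc (1:ℤ) ≤ |P.coeff d| := Int.one_le_abs (by exact_mod_cast hlc)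
      _ ≤ KZ := Finset.single_le_sum (f := fun i => |P.coeff i|)
          (fun i _ => abs_nonneg _) (by rw [Finset.mem_range]; omega)
  have h2KZnn : (0:ℝ) ≤ ((2*KZ : ℤ) : ℝ) := by
    have : (0:ℤ) ≤ 2*KZ := by omega
    exact_mod_cast this
  set Kc : ℝ := 2 * d * C' * ((2*KZ : ℤ) : ℝ) ^ ε' with hKcdef
  have hKcnn : 0 ≤ Kc := by
    apply mul_nonneg
    · positivity
    · exact Real.rpow_nonneg h2KZnn _
  refine ⟨1 + Kc, by linarith, ?_⟩
  intro N hN hinj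
  set I := Finset.Icc (1:ℤ) (N:ℤ) with hI
  have hIcard : I.card = N := by
    rw [hI, Int.card_Icc]
    simp
  have hmemI : ∀ x, x ∈ I → x ∈ Set.Icc (1:ℤ) (N:ℤ) := by
    intro x hx; rw [hI, Finset.mem_Icc] at hx; exact Set.mem_Icc.mpr hx
  have hinj2 : ∀ x ∈ I, ∀ y ∈ I, P.eval x = P.eval y → x = y := fun x hx y hy h =>
    hinj (hmemI x hx) (hmemI y hy) h
  set A := I.image P.eval with hA
  set Q4 := ((I ×ˢ I ×ˢ I ×ˢ I).filter fun q =>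
    P.eval q.1 + P.eval q.2.1 = P.eval q.2.2.1 + P.eval q.2.2.2) with hQ4
  -- Step 1: energy bounded by quadruple count
  have hstep1 : addEnergy A ≤ Q4.card := by
    rw [addEnergy]
    apply Finset.card_le_card_of_surjOn
      (fun q : ℤ×ℤ×ℤ×ℤ => (P.eval q.1, P.eval q.2.1, P.eval q.2.2.1, P.eval q.2.2.2))
    intro p hp
    rw [Finset.mem_coe, Finset.mem_filter] at hp
    obtain ⟨hmem, heq⟩ := hp
    rw [Finset.mem_product] at hmem
    obtain ⟨h1, hmem⟩ := hmem
    rw [Finset.mem_product] at hmem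
    obtain ⟨h2, hmem⟩ := hmem
    rw [Finset.mem_product] at hmem
    obtain ⟨h3, h4⟩ := hmem
    rw [hA, Finset.mem_image] at h1 h2 h3 h4
    obtain ⟨x, hx, hx'⟩ := h1
    obtain ⟨y, hy, hy'⟩ := h2
    obtain ⟨z, hz, hz'⟩ := h3
    obtain ⟨w, hw, hw'⟩ := h4
    refine ⟨(x, y, z, w), ?_, ?_⟩
    · rw [Finset.mem_coe, hQ4, Finset.mem_filter]
      constructor
      · rw [Finset.mem_product]
        refine ⟨hx, ?_⟩
        rw [Finset.mem_product]
        refine ⟨hy, ?_⟩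
        rw [Finset.mem_product]
        exact ⟨hz, hw⟩
      · show P.eval x + P.eval y = P.eval z + P.eval w
        rw [hx', hy', hz', hw']
        exact heq
    · show (P.eval x, P.eval y, P.eval z, P.eval w) = p
      rw [hx', hy', hz', hw']
  -- split the quadruple count
  set T1 := Q4.filter (fun q => q.1 = q.2.2.1) with hT1
  set T2 := Q4.filter (fun q => ¬ q.1 = q.2.2.1) with hT2
  have hsplit : T1.card + T2.card = Q4.card :=
    Finset.card_filter_add_card_filter_not _
  -- membership helper
  have hQ4mem : ∀ q ∈ Q4, q.1 ∈ I ∧ q.2.1 ∈ I ∧ q.2.2.1 ∈ I ∧ q.2.2.2 ∈ I ∧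
      P.eval q.1 + P.eval q.2.1 = P.eval q.2.2.1 + P.eval q.2.2.2 := by
    intro q hq
    rw [hQ4, Finset.mem_filter] at hq
    obtain ⟨hmem, heq⟩ := hq
    rw [Finset.mem_product] at hmem
    obtain ⟨m1, hmem⟩ := hmem
    rw [Finset.mem_product] at hmem
    obtain ⟨m2, hmem⟩ := hmem
    rw [Finset.mem_product] at hmem
    exact ⟨m1, m2, hmem.1, hmem.2, heq⟩
  -- T1 bound
  have hT1card : T1.card ≤ N * N := by
    have hle : T1.card ≤ (I ×ˢ I).card := by
      apply Finset.card_le_card_of_injOn (fun q => (q.1, q.2.1))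
      · intro q hq
        rw [hT1, Finset.mem_coe, Finset.mem_filter] at hq
        obtain ⟨m1, m2, _, _, _⟩ := hQ4mem q hq.1
        rw [Finset.mem_coe, Finset.mem_product]
        exact ⟨m1, m2⟩
      · intro q hq r hr hqr
        rw [Finset.mem_coe, hT1, Finset.mem_filter] at hq hr
        obtain ⟨hqQ, hqe⟩ := hq
        obtain ⟨hrQ, hre⟩ := hr
        obtain ⟨q1, q2, q3, q4, qeq⟩ := hQ4mem q hqQ
        obtain ⟨r1, r2, r3, r4, req⟩ := hQ4mem r hrQ
        have hqr' : (q.1, q.2.1) = (r.1, r.2.1) := hqr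
        rw [Prod.mk.injEq] at hqr'
        obtain ⟨h11, h21⟩ := hqr'
        have hq42 : q.2.2.2 = q.2.1 := by
          apply hinj2 _ q4 _ q2
          have : P.eval q.1 = P.eval q.2.2.1 := congrArg P.eval hqe
          omega
        have hr42 : r.2.2.2 = r.2.1 := by
          apply hinj2 _ r4 _ r2
          have : P.eval r.1 = P.eval r.2.2.1 := congrArg P.eval hre
          omega
        have hq3 : q.2.2.1 = r.2.2.1 := by rw [← hqe, ← hre]; exact h11
        have hq4' : q.2.2.2 = r.2.2.2 := by rw [hq42, hr42]; exact h21
        exact Prod.ext h11 (Prod.ext h21 (Prod.ext hq3 hq4'))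
    rwa [Finset.card_product, hIcard] at hle
  -- bound on values
  set B : ℤ := 2 * KZ * (N:ℤ)^d with hBdef
  have hBpos : (0:ℤ) < B := by
    have : (0:ℤ) < (N:ℤ)^d := by positivity
    nlinarith
  set Mb : ℝ := 2 * d * C' * ((B : ℤ) : ℝ) ^ ε' with hMbdef
  have hMbnn : 0 ≤ Mb := by
    apply mul_nonneg (by positivity)
    exact Real.rpow_nonneg (by exact_mod_cast hBpos.le) _
  -- fiber bound
  have hfiber : ∀ a ∈ I ×ˢ I,
      ((T2.filter (fun q => (q.2.2.2, q.2.1) = a)).card : ℝ) ≤ Mb := by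
    intro a ha
    rw [Finset.mem_product] at ha
    set n := P.eval a.1 - P.eval a.2 with hndef
    by_cases hn0 : n = 0
    · have hempty : T2.filter (fun q => (q.2.2.2, q.2.1) = a) = ∅ := by
        rw [Finset.filter_eq_empty_iff]
        intro q hq hqa
        rw [hT2, Finset.mem_filter] at hq
        obtain ⟨hqQ, hqne⟩ := hq
        obtain ⟨q1, q2, q3, q4, qeq⟩ := hQ4mem q hqQ
        rw [Prod.mk.injEq] at hqa
        have e4 : P.eval q.2.2.2 = P.eval a.1 := congrArg P.eval hqa.1
        have e2 : P.eval q.2.1 = P.eval a.2 := congrArg P.eval hqa.2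
        have heq13 : P.eval q.1 = P.eval q.2.2.1 := by omega
        exact hqne (hinj2 _ q1 _ q3 heq13)
      rw [hempty]
      simpa using hMbnn
    · have hcount : (T2.filter (fun q => (q.2.2.2, q.2.1) = a)).card ≤
          2 * n.natAbs.divisors.card * d := by
        refine le_trans ?_ (PEB_rep_bound P hd N n hn0)
        apply Finset.card_le_card_of_injOn (fun q => (q.1, q.2.2.1))
        · intro q hq
          rw [Finset.mem_coe, Finset.mem_filter, hT2, Finset.mem_filter] at hq
          obtain ⟨⟨hqQ, hqne⟩, hqa⟩ := hq
          obtain ⟨q1, q2, q3, q4, qeq⟩ := hQ4mem q hqQ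
          rw [Finset.mem_coe, Finset.mem_filter, Finset.mem_product]
          refine ⟨⟨q1, q3⟩, ?_⟩
          rw [Prod.mk.injEq] at hqa
          have e4 : P.eval q.2.2.2 = P.eval a.1 := congrArg P.eval hqa.1
          have e2 : P.eval q.2.1 = P.eval a.2 := congrArg P.eval hqa.2
          show P.eval q.1 - P.eval q.2.2.1 = n
          omega
        · intro q hq r hr hqr
          rw [Finset.mem_coe, Finset.mem_filter] at hq hr
          have hqa := hq.2
          have hra := hr.2
          have hqr' : (q.1, q.2.2.1) = (r.1, r.2.2.1) := hqr
          rw [Prod.mk.injEq] at hqr' hqa hra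
          obtain ⟨h1, h3⟩ := hqr'
          have h4 : q.2.2.2 = r.2.2.2 := by rw [hqa.1, hra.1]
          have h2 : q.2.1 = r.2.1 := by rw [hqa.2, hra.2]
          exact Prod.ext h1 (Prod.ext h2 (Prod.ext h3 h4))
      have hτ : ((n.natAbs.divisors.card : ℝ)) ≤ C' * ((n.natAbs:ℝ))^ε' :=
        hC' _ (Int.natAbs_ne_zero.mpr hn0)
      have hnB : ((n.natAbs : ℝ)) ≤ ((B:ℤ):ℝ) := by
        have h1 : |P.eval a.1| ≤ KZ * (N:ℤ)^d := PEB_eval_bound P N hN a.1 ha.1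
        have h2 : |P.eval a.2| ≤ KZ * (N:ℤ)^d := PEB_eval_bound P N hN a.2 ha.2
        have habs : |n| ≤ B := by
          rw [hndef, hBdef]
          calc |P.eval a.1 - P.eval a.2| ≤ |P.eval a.1| + |P.eval a.2| := abs_sub _ _
            _ ≤ 2 * KZ * (N:ℤ)^d := by linarith
        rw [Nat.cast_natAbs]
        exact_mod_cast habs
      have hrpow : ((n.natAbs:ℝ))^ε' ≤ (((B:ℤ)):ℝ)^ε' :=
        Real.rpow_le_rpow (by positivity) hnB hε'pos.le
      calc ((T2.filter (fun q => (q.2.2.2, q.2.1) = a)).card : ℝ) ≤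
            ((2 * n.natAbs.divisors.card * d : ℕ) : ℝ) := by exact_mod_cast hcount
        _ = 2 * ((n.natAbs.divisors.card : ℝ)) * d := by push_cast; ring
        _ ≤ 2 * (C' * ((n.natAbs:ℝ))^ε') * d := by
            have := mul_le_mul_of_nonneg_left hτ (by norm_num : (0:ℝ) ≤ 2)
            have := mul_le_mul_of_nonneg_right this (by positivity : (0:ℝ) ≤ (d:ℝ))
            linarith
        _ ≤ 2 * (C' * (((B:ℤ)):ℝ)^ε') * d := by
            have := mul_le_mul_of_nonneg_left hrpow hC'pos.le
            nlinarith [this]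
        _ = Mb := by rw [hMbdef]; ring
  -- T2 bound
  have hT2card : (T2.card : ℝ) ≤ (N:ℝ) * (N:ℝ) * Mb := by
    have hmap : ∀ q ∈ T2, (q.2.2.2, q.2.1) ∈ I ×ˢ I := by
      intro q hq
      rw [hT2, Finset.mem_filter] at hq
      obtain ⟨_, q2, _, q4, _⟩ := hQ4mem q hq.1
      rw [Finset.mem_product]
      exact ⟨q4, q2⟩
    have hfw := Finset.card_eq_sum_card_fiberwise hmap
    rw [hfw]
    push_cast
    calc (∑ a ∈ I ×ˢ I, ((T2.filter (fun q => (q.2.2.2, q.2.1) = a)).card : ℝ)) ≤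
          ∑ _a ∈ I ×ˢ I, Mb := Finset.sum_le_sum hfiber
      _ = ((I ×ˢ I).card : ℝ) * Mb := by rw [Finset.sum_const, nsmul_eq_mul]
      _ = (N:ℝ) * (N:ℝ) * Mb := by rw [Finset.card_product, hIcard]; push_cast; ring
  -- put it together
  have hNpos : (0:ℝ) < (N:ℝ) := by exact_mod_cast Nat.lt_of_lt_of_le Nat.zero_lt_one hN
  have hN1 : (1:ℝ) ≤ (N:ℝ) := by exact_mod_cast hN
  have hNε1 : (1:ℝ) ≤ (N:ℝ)^ε := Real.one_le_rpow hN1 hε.le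
  have hNpow : (N:ℝ)^((2:ℝ)+ε) = (N:ℝ) * (N:ℝ) * (N:ℝ)^ε := by
    rw [Real.rpow_add hNpos]
    congr 1
    have : ((2:ℝ)) = ((2:ℕ):ℝ) := by norm_num
    rw [this, Real.rpow_natCast]
    ring
  have hMbKc : Mb ≤ Kc * (N:ℝ)^ε := by
    rw [hMbdef, hKcdef]
    have hBcast : ((B:ℤ):ℝ) = ((2*KZ:ℤ):ℝ) * (N:ℝ)^(d:ℕ) := by
      rw [hBdef]; push_cast; ring
    rw [hBcast, Real.mul_rpow h2KZnn (by positivity)]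
    have hpow : ((N:ℝ)^(d:ℕ))^ε' = (N:ℝ)^ε := by
      rw [← Real.rpow_natCast (N:ℝ) d, ← Real.rpow_mul hNpos.le]
      congr 1
      rw [hε'def]
      field_simp
    rw [hpow]
    apply le_of_eq
    ring
  have hNN : (0:ℝ) ≤ (N:ℝ) * (N:ℝ) := by positivity
  have e1 : (N:ℝ) * (N:ℝ) ≤ (N:ℝ) * (N:ℝ) * (N:ℝ)^ε := by
    calc (N:ℝ) * (N:ℝ) = (N:ℝ) * (N:ℝ) * 1 := by ring
      _ ≤ (N:ℝ) * (N:ℝ) * (N:ℝ)^ε := mul_le_mul_of_nonneg_left hNε1 hNN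
  have e2 : (N:ℝ) * (N:ℝ) * Mb ≤ (N:ℝ) * (N:ℝ) * (Kc * (N:ℝ)^ε) :=
    mul_le_mul_of_nonneg_left hMbKc hNN
  have hEQ : (1 + Kc) * ((N:ℝ) * (N:ℝ) * (N:ℝ)^ε) =
      (N:ℝ) * (N:ℝ) * (N:ℝ)^ε + (N:ℝ) * (N:ℝ) * (Kc * (N:ℝ)^ε) := by ring
  calc (addEnergy A : ℝ) ≤ (Q4.card : ℝ) := by exact_mod_cast hstep1
    _ = (T1.card : ℝ) + (T2.card : ℝ) := by exact_mod_cast hsplit.symm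
    _ ≤ (N:ℝ) * (N:ℝ) + (N:ℝ) * (N:ℝ) * Mb := by
        have : (T1.card : ℝ) ≤ (N:ℝ) * (N:ℝ) := by exact_mod_cast hT1card
        linarith
    _ ≤ (1 + Kc) * (N:ℝ)^((2:ℝ)+ε) := by
        rw [hNpow, hEQ]
        linarith
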